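/- Let Π have homomorphism multipliers c_1, ..., c_n whose exponent vectors are distinct irreducible elements of the monoid S = M_Π(ℕ^n) ⊆ ℕ^k, with translation vector b. Then for any unary P system Π' = ({a}, h'_1,...,h'_{n'}, a^{w'}) with multipliers c'_i generating the same L_*-language, we have n' ≥ n, and the multiset {c_1, ..., c_n} is a sub(multi)set of {c'_1, ..., c'_{n'}}; consequently |Π'| = w' + Σ c'_i ≥ w + Σ c_i = |Π|. -/

import Mathlib

private lemma sum_split {ι : Type*} [DecidableEq ι] (S : AddSubmonoid (ℕ →₀ ℕ)) (x : ℕ →₀ ℕ)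
    (hx : x ≠ 0)
    (hirrx : ¬ ∃ x₁ x₂, x₁ ∈ S ∧ x₂ ∈ S ∧ x₁ ≠ 0 ∧ x₂ ≠ 0 ∧ x = x₁ + x₂)
    (t : Finset ι) (y : ι → (ℕ →₀ ℕ)) (hy : ∀ j ∈ t, y j ∈ S)
    (heq : x = ∑ j ∈ t, y j) : ∃ j ∈ t, x = y j := by
  induction t using Finset.induction_on with
  | empty => simp at heq; exact absurd heq hx
  | insert a s hnotmem ih =>
    rw [Finset.sum_insert hnotmem] at heq
    by_cases h0 : y a = 0
    · rw [h0, zero_add] at heq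
      obtain ⟨j, hj, hxj⟩ := ih (fun j hj => hy j (Finset.mem_insert_of_mem hj)) heq
      exact ⟨j, Finset.mem_insert_of_mem hj, hxj⟩
    by_cases hs : ∑ j ∈ s, y j = 0
    · rw [hs, add_zero] at heq
      exact ⟨a, Finset.mem_insert_self a s, heq⟩
    exact absurd ⟨y a, ∑ j ∈ s, y j, hy a (Finset.mem_insert_self a s),
      AddSubmonoid.sum_mem S (fun j hj => hy j (Finset.mem_insert_of_mem hj)),
      h0, hs, heq⟩ hirrx

/-- Theorem 2: if the exponent vectors of the multipliers c_i of Π are distinct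
irreducible elements of the associated monoid S, then any unary P system Π'
generating the same L_*-language has at least as many homomorphisms, contains
all the c_i among its multipliers, and has size at least |Π| = w + Σ c_i. -/
theorem stmt_17 (n n' : ℕ) (c : Fin n → ℕ) (hc : ∀ i, 2 ≤ c i)
    (c' : Fin n' → ℕ) (hc' : ∀ i, 1 ≤ c' i) (w w' : ℕ) (hw : 1 ≤ w) (hw' : 1 ≤ w')
    (S : AddSubmonoid (ℕ →₀ ℕ))
    (hSdef : S = AddSubmonoid.closure (Set.range fun i => (c i).factorization))
    (hdistinct : Function.Injective fun i => (c i).factorization)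
    (hirr : ∀ i : Fin n, ¬ ∃ x₁ x₂, x₁ ∈ S ∧ x₂ ∈ S ∧ x₁ ≠ 0 ∧ x₂ ≠ 0 ∧
      (c i).factorization = x₁ + x₂)
    (hlang : {x : ℕ | ∃ m : Fin n → ℕ, x = (∏ i, c i ^ m i) * w} =
             {x : ℕ | ∃ m : Fin n' → ℕ, x = (∏ i, c' i ^ m i) * w'}) :
    n ≤ n' ∧ (∃ f : Fin n → Fin n', Function.Injective f ∧ ∀ i, c' (f i) = c i) ∧
    w + ∑ i, c i ≤ w' + ∑ i, c' i := by
  have hLR : ∀ x, (∃ m : Fin n → ℕ, x = (∏ i, c i ^ m i) * w) ↔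
      (∃ m : Fin n' → ℕ, x = (∏ i, c' i ^ m i) * w') := fun x =>
    Set.ext_iff.mp hlang x
  -- w = w'
  have hww' : w = w' := by
    obtain ⟨m, hm⟩ := (hLR w).mp ⟨0, by simp⟩
    obtain ⟨m', hm'⟩ := (hLR w').mpr ⟨0, by simp⟩
    have h1 : 1 ≤ ∏ i, c' i ^ m i := Finset.one_le_prod' fun i _ =>
      Nat.one_le_pow _ _ (hc' i)
    have h2 : 1 ≤ ∏ i, c i ^ m' i := Finset.one_le_prod' fun i _ =>
      Nat.one_le_pow _ _ (by have := hc i; omega)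
    nlinarith [hm, hm']
  subst hww'
  -- c injective
  have hcinj : Function.Injective c := fun i j hij => hdistinct (by simp [hij])
  -- each c i is a product of c' powers, and vice versa
  have hmemL : ∀ i : Fin n, ∃ m : Fin n' → ℕ, c i = ∏ j, c' j ^ m j := by
    intro i
    obtain ⟨m, hm⟩ := (hLR (c i * w)).mp
      ⟨fun j => if j = i then 1 else 0, by simp [pow_ite]⟩
    exact ⟨m, Nat.eq_of_mul_eq_mul_right (by omega) hm⟩
  have hmemR : ∀ j : Fin n', ∃ m : Fin n → ℕ, c' j = ∏ i, c i ^ m i := by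
    intro j
    obtain ⟨m, hm⟩ := (hLR (c' j * w)).mpr
      ⟨fun i => if i = j then 1 else 0, by simp [pow_ite]⟩
    exact ⟨m, Nat.eq_of_mul_eq_mul_right (by omega) hm⟩
  -- factorization of c' j is in S
  have hgS : ∀ j : Fin n', (c' j).factorization ∈ S := by
    intro j
    obtain ⟨m, hm⟩ := hmemR j
    rw [hm, Nat.factorization_prod (fun i _ => pow_ne_zero _ (by have := hc i; omega))]
    apply AddSubmonoid.sum_mem
    intro i _
    rw [Nat.factorization_pow]
    exact AddSubmonoid.nsmul_mem _ (hSdef ▸ AddSubmonoid.subset_closure ⟨i, rfl⟩) _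
  -- each c i equals some c' j
  have key : ∀ i : Fin n, ∃ j : Fin n', c' j = c i := by
    intro i
    obtain ⟨m, hm⟩ := hmemL i
    have hfx : (c i).factorization ≠ 0 := by
      have h2 := hc i
      intro h
      have := Nat.Prime.factorization_pos_of_dvd (Nat.minFac_prime (by omega))
        (by omega) (Nat.minFac_dvd (c i))
      simp [h] at this
    have heq : (c i).factorization = ∑ j, m j • (c' j).factorization := by
      rw [hm, Nat.factorization_prod (fun j _ => pow_ne_zero _ (by have := hc' j; omega))]
      simp [Nat.factorization_pow]
    obtain ⟨j, _, hxj⟩ := sum_split S _ hfx (hirr i) Finset.univ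
      (fun j => m j • (c' j).factorization)
      (fun j _ => AddSubmonoid.nsmul_mem _ (hgS j) _) heq
    refine ⟨j, ?_⟩
    have hg0 : (c' j).factorization ≠ 0 := by
      intro h; rw [h, smul_zero] at hxj; exact hfx hxj
    have hmj1 : m j = 1 := by
      rcases Nat.lt_or_ge (m j) 2 with h | h
      · interval_cases h' : m j
        · simp [h'] at hxj; exact absurd hxj hfx
        · rfl
      · exfalso
        apply hirr i
        refine ⟨(c' j).factorization, (m j - 1) • (c' j).factorization, hgS j,
          AddSubmonoid.nsmul_mem _ (hgS j) _, hg0, ?_, ?_⟩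
        · intro hz
          have : m j - 1 ≠ 0 := by omega
          obtain ⟨k, hk⟩ : ∃ k, m j - 1 = k + 1 := ⟨m j - 2, by omega⟩
          rw [hk, succ_nsmul] at hz
          exact hg0 ((add_eq_zero.mp hz).2)
        · rw [hxj]
          rw [← succ_nsmul']
          congr 1
          omega
    rw [hmj1, one_smul] at hxj
    have : c' j ≠ 0 := by have := hc' j; omega
    have : c i ≠ 0 := by have := hc i; omega
    exact (Nat.factorization_inj (by simpa using ‹c' j ≠ 0›) (by simpa using ‹c i ≠ 0›)
      hxj.symm)
  choose f hf using key
  have hfinj : Function.Injective f := by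
    intro i₁ i₂ h
    apply hcinj
    rw [← hf i₁, ← hf i₂, h]
  refine ⟨Fintype.card_fin n ▸ Fintype.card_fin n' ▸ Fintype.card_le_of_injective f hfinj,
    ⟨f, hfinj, hf⟩, ?_⟩
  have : ∑ i, c i ≤ ∑ j, c' j := by
    calc ∑ i, c i = ∑ i, c' (f i) := by simp [hf]
    _ = ∑ j ∈ Finset.univ.image f, c' j := (Finset.sum_image (fun a _ b _ h => hfinj h)).symm
    _ ≤ ∑ j, c' j := Finset.sum_le_sum_of_subset (Finset.subset_univ _)
  omega
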